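/- Let V = k·e ⊕ V' over a field k of characteristic ≠ 2, let U ⊆ ⋀²V' be a linear subspace, let x ∈ V' and let y ∈ U with y ≠ 0. Then e ∧ x + y is decomposable in ⋀²V if and only if there exists a 2-dimensional subspace V² ⊆ V' such that x ∈ V², y ∈ ⋀²V², and ⋀²V² ⊆ U. -/

import Mathlib

open ExteriorAlgebra

set_option maxHeartbeats 1000000

section aux
variable {k : Type*} [Field k] {M : Type*} [AddCommGroup M] [Module k M]

lemma my_wedge_swap (u v : M) : ι k v * ι k u = - (ι k u * ι k v) :=
  eq_neg_of_add_eq_zero_left (by rw [add_comm]; exact ι_add_mul_swap u v)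

lemma my_wedge_expand (p q : M) (a b c d : k) :
    ι k (a•p+b•q) * ι k (c•p+d•q) = (a*d-b*c) • (ι k p * ι k q) := by
  simp only [map_add, map_smul, add_mul, mul_add, smul_mul_assoc, mul_smul_comm, ι_sq_zero,
    smul_zero, my_wedge_swap q p]
  module

lemma my_pow2_le_span (p q : M) (hspan : ∀ m : M, m ∈ Submodule.span k {p, q}) :
    ⋀[k]^2 M ≤ Submodule.span k {ι k p * ι k q} := by
  rw [← ιMulti_span_fixedDegree, Submodule.span_le]
  rintro _ ⟨f, rfl⟩
  have h0 := Submodule.mem_span_pair.mp (hspan (f 0))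
  have h1 := Submodule.mem_span_pair.mp (hspan (f 1))
  obtain ⟨a, b, h0⟩ := h0; obtain ⟨c, d, h1⟩ := h1
  have hf : ιMulti k 2 f = ι k (f 0) * ι k (f 1) := by
    simp [ιMulti_apply, List.ofFn_succ, Matrix.vecTail]
  rw [SetLike.mem_coe, hf, ← h0, ← h1, my_wedge_expand]
  exact Submodule.smul_mem _ _ (Submodule.mem_span_singleton_self _)

lemma my_contract_wedge (d : Module.Dual k M) (m n : M) :
    CliffordAlgebra.contractLeft (Q := (0 : QuadraticForm k M)) d (ι k m * ι k n)
      = d m • ι k n - d n • ι k m := by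
  rw [CliffordAlgebra.contractLeft_ι_mul, CliffordAlgebra.contractLeft_ι]
  rw [← Algebra.commutes, ← Algebra.smul_def]

lemma my_decomp_aux1 (e w0 w1 : M) (α β c : k) (hα : α ≠ 0) :
    ι k e * ι k (α•w0 + β•w1) + c • (ι k w0 * ι k w1)
      = ι k (e - (c/α)•w1) * ι k (α•w0 + β•w1) := by
  have hw : ι k w1 * ι k (α•w0 + β•w1) = (-α) • (ι k w0 * ι k w1) := by
    have := my_wedge_expand w0 w1 (0:k) 1 α β
    simpa using this
  rw [map_sub, map_smul, sub_mul, smul_mul_assoc, hw, smul_smul]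
  have : c/α * (-α) = -c := by field_simp
  rw [this, neg_smul, sub_neg_eq_add]

lemma my_decomp_aux2 (e w0 w1 : M) (α β c : k) (hβ : β ≠ 0) :
    ι k e * ι k (α•w0 + β•w1) + c • (ι k w0 * ι k w1)
      = ι k (e + (c/β)•w0) * ι k (α•w0 + β•w1) := by
  have hw : ι k w0 * ι k (α•w0 + β•w1) = β • (ι k w0 * ι k w1) := by
    have := my_wedge_expand w0 w1 (1:k) 0 α β
    simpa using this
  rw [show ι k (e + (c/β)•w0) = ι k e + (c/β) • ι k w0 by rw [map_add, map_smul],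
    add_mul, smul_mul_assoc, hw, smul_smul]
  have : c/β * β = c := div_mul_cancel₀ c hβ
  rw [this]

end aux

/-- Lemma 2.2 of the paper: for `V = k·e ⊕ V'` (modelled as `k × V'` with `e = (1,0)`),
a subspace `U ⊆ ⋀²V'`, `x ∈ V'` and `0 ≠ y ∈ U`, the 2-vector `e ∧ x + y` is
decomposable iff there is a 2-dimensional subspace `V² ⊆ V'` with `x ∈ V²`,
`y ∈ ⋀²V²` and `⋀²V² ⊆ U`. -/
theorem stmt4 (k : Type*) [Field k] (h2 : (2 : k) ≠ 0) (V' : Type*)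
    [AddCommGroup V'] [Module k V'] [FiniteDimensional k V']
    (U : Submodule k (ExteriorAlgebra k V')) (hU : U ≤ ⋀[k]^2 V')
    (x : V') (y : ExteriorAlgebra k V') (hy : y ∈ U) (hyne : y ≠ 0) :
    (∃ a b : k × V',
        ι k ((1 : k), (0 : V')) * ι k ((0 : k), x)
          + ExteriorAlgebra.map (LinearMap.inr k k V') y = ι k a * ι k b) ↔
      (∃ V2 : Submodule k V', Module.finrank k V2 = 2 ∧ x ∈ V2 ∧
        y ∈ Submodule.map (ExteriorAlgebra.map V2.subtype).toLinearMap (⋀[k]^2 V2) ∧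
        Submodule.map (ExteriorAlgebra.map V2.subtype).toLinearMap (⋀[k]^2 V2) ≤ U) := by
  constructor
  · rintro ⟨a, b, hab⟩
    set u := a.2 with hu
    set v := b.2 with hv
    -- apply the algebra morphism induced by the second projection
    have hG : y = ι k u * ι k v := by
      have h := congrArg (ExteriorAlgebra.map (LinearMap.snd k k V')) hab
      rw [map_add, map_mul, map_mul, map_apply_ι, map_apply_ι, map_apply_ι, map_apply_ι,
        ← AlgHom.comp_apply, map_comp_map, LinearMap.snd_comp_inr, map_id] at h
      simpa using h
    -- apply contraction with the first coordinate functional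
    have hz : ∀ w ∈ Submodule.span k (Set.range (ιMulti k 2 (M := V'))),
        CliffordAlgebra.contractLeft (Q := (0 : QuadraticForm k (k × V')))
          (LinearMap.fst k k V')
          (ExteriorAlgebra.map (LinearMap.inr k k V') w) = 0 := by
      intro w hw
      induction hw using Submodule.span_induction with
      | mem z hzz =>
          obtain ⟨f, rfl⟩ := hzz
          rw [show ιMulti k 2 f = ι k (f 0) * ι k (f 1) from by
              simp [ιMulti_apply, List.ofFn_succ, Matrix.vecTail],
            map_mul, map_apply_ι, map_apply_ι, my_contract_wedge]
          simp
      | zero => simp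
      | add _ _ _ _ h1 h2 => rw [map_add, map_add, h1, h2, add_zero]
      | smul c _ _ h1 => rw [map_smul, map_smul, h1, smul_zero]
    have hxuv : x = a.1 • v - b.1 • u := by
      have h := congrArg (CliffordAlgebra.contractLeft (Q := (0 : QuadraticForm k (k × V')))
        (LinearMap.fst k k V')) hab
      rw [map_add, my_contract_wedge, my_contract_wedge,
        hz y (by rw [ιMulti_span_fixedDegree]; exact hU hy)] at h
      simp only [LinearMap.fst_apply, one_smul, zero_smul, sub_zero, add_zero] at h
      have h2' := congrArg (ExteriorAlgebra.map (LinearMap.snd k k V')) h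
      simp only [map_sub, map_smul, map_apply_ι, LinearMap.snd_apply] at h2'
      rw [← map_smul, ← map_smul, ← map_sub] at h2'
      exact (ExteriorAlgebra.ι_inj (R := k) _ _).mp h2'
    set V2 := Submodule.span k ({u, v} : Set V') with hV2
    have hmemu : u ∈ V2 := Submodule.subset_span (by simp)
    have hmemv : v ∈ V2 := Submodule.subset_span (by simp)
    have hxm : x ∈ V2 := hxuv ▸ sub_mem (Submodule.smul_mem _ _ hmemv)
      (Submodule.smul_mem _ _ hmemu)
    have hli : LinearIndependent k ![u, v] := by
      rw [LinearIndependent.pair_iff]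
      intro s t hst
      have e1 := my_wedge_expand u v s t (0:k) 1
      have e2 := my_wedge_expand u v (1:k) 0 s t
      simp only [zero_smul, one_smul, add_zero, zero_add, mul_one, mul_zero, one_mul,
        sub_zero, zero_sub, zero_mul] at e1 e2
      rw [hst, map_zero, zero_mul] at e1
      rw [hst, map_zero, mul_zero] at e2
      rw [← hG] at e1 e2
      constructor
      · rcases smul_eq_zero.mp e1.symm with h | h
        · exact h
        · exact absurd h hyne
      · rcases smul_eq_zero.mp e2.symm with h | h
        · exact h
        · exact absurd h hyne
    have hr : Module.finrank k ↥V2 = 2 := by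
      have hrange : Set.range ![u, v] = ({u, v} : Set V') := by
        ext w
        simp [Fin.exists_fin_two, eq_comm, or_comm]
      rw [hV2, ← hrange, finrank_span_eq_card hli, Fintype.card_fin]
    set p : V2 := ⟨u, hmemu⟩ with hp
    set q : V2 := ⟨v, hmemv⟩ with hq
    have hspan : ∀ m : V2, m ∈ Submodule.span k {p, q} := by
      intro m
      obtain ⟨s, t, hst⟩ := Submodule.mem_span_pair.mp m.2
      exact Submodule.mem_span_pair.mpr ⟨s, t, Subtype.ext (by exact hst)⟩
    have hpq : ι k p * ι k q ∈ ⋀[k]^2 (↥V2) := by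
      show _ ∈ LinearMap.range (ι k : ↥V2 →ₗ[k] ExteriorAlgebra k ↥V2) ^ 2
      rw [pow_two]
      exact Submodule.mul_mem_mul (LinearMap.mem_range_self _ _) (LinearMap.mem_range_self _ _)
    have hmapy : (ExteriorAlgebra.map V2.subtype) (ι k p * ι k q) = y := by
      rw [map_mul, map_apply_ι, map_apply_ι, hG]; rfl
    refine ⟨V2, hr, hxm, ?_, ?_⟩
    · exact Submodule.mem_map.mpr ⟨ι k p * ι k q, hpq, hmapy⟩
    · calc Submodule.map (ExteriorAlgebra.map V2.subtype).toLinearMap (⋀[k]^2 ↥V2)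
          ≤ Submodule.map (ExteriorAlgebra.map V2.subtype).toLinearMap
              (Submodule.span k {ι k p * ι k q}) :=
            Submodule.map_mono (my_pow2_le_span p q hspan)
        _ = Submodule.span k {y} := by
            rw [Submodule.map_span, Set.image_singleton]
            congr 1
            rw [AlgHom.toLinearMap_apply, hmapy]
        _ ≤ U := by rw [Submodule.span_le, Set.singleton_subset_iff]; exact hy
  · rintro ⟨V2, hr, hxV2, hymem, -⟩
    obtain ⟨z, hz, hzy⟩ := Submodule.mem_map.mp hymem
    rw [AlgHom.toLinearMap_apply] at hzy
    let bV := Module.finBasisOfFinrankEq k V2 hr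
    have hspan : ∀ m : V2, m ∈ Submodule.span k {bV 0, bV 1} := by
      intro m
      have hrange : Set.range bV = ({bV 0, bV 1} : Set V2) := by
        ext w
        simp [Fin.exists_fin_two, eq_comm, or_comm]
      rw [← hrange, bV.span_eq]
      exact Submodule.mem_top
    obtain ⟨c, hc⟩ := Submodule.mem_span_singleton.mp (my_pow2_le_span _ _ hspan hz)
    set v0 : V' := (bV 0 : V') with hv0
    set v1 : V' := (bV 1 : V') with hv1
    have hy' : y = c • (ι k v0 * ι k v1) := by
      rw [← hzy, ← hc, map_smul, map_mul, map_apply_ι, map_apply_ι]; rfl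
    obtain ⟨α, β, hαβ⟩ := Submodule.mem_span_pair.mp (hspan ⟨x, hxV2⟩)
    have hx : x = α • v0 + β • v1 := by
      have := congrArg (Subtype.val) hαβ
      simpa using this.symm
    have hmy : ExteriorAlgebra.map (LinearMap.inr k k V') y
        = c • (ι k ((0:k), v0) * ι k ((0:k), v1)) := by
      rw [hy', map_smul, map_mul, map_apply_ι, map_apply_ι]; rfl
    have hxprod : ((0:k), x) = α • ((0:k), v0) + β • ((0:k), v1) := by
      simp [Prod.ext_iff, hx]
    rcases eq_or_ne α 0 with hα | hα
    · rcases eq_or_ne β 0 with hβ | hβ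
      · have hx0 : x = 0 := by rw [hx, hα, hβ]; simp
        refine ⟨((0:k), c • v0), ((0:k), v1), ?_⟩
        rw [hx0, hmy, show ((0:k), c • v0) = c • ((0:k), v0) by simp [Prod.ext_iff],
          map_smul, smul_mul_assoc, show ((0:k), (0:V')) = (0 : k × V') from rfl]
        simp
      · refine ⟨((1:k), (c/β) • v0), ((0:k), x), ?_⟩
        rw [hmy, hxprod,
          show ((1:k), (c/β) • v0) = ((1:k), (0:V')) + (c/β) • ((0:k), v0) by
            simp [Prod.ext_iff]]
        exact my_decomp_aux2 _ _ _ α β c hβ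
    · refine ⟨((1:k), -((c/α) • v1)), ((0:k), x), ?_⟩
      rw [hmy, hxprod,
        show ((1:k), -((c/α) • v1)) = ((1:k), (0:V')) - (c/α) • ((0:k), v1) by
          simp [Prod.ext_iff]]
      exact my_decomp_aux1 _ _ _ α β c hα
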